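/- Let S be the numerical semigroup generated by d-1 and d for an integer d > 1. Then for every j with 0 ≤ j ≤ d-2, the number of elements of S in the interval [0, jd+1) equals (j+1)(j+2)/2. -/
import Mathlib

lemma triangle_sum (j : ℕ) : ∑ a ∈ Finset.range (j+1), (j+1-a) = (j + 1) * (j + 2) / 2 := by
  have h1 : ∑ a ∈ Finset.range (j+1), (j+1-a) = ∑ a ∈ Finset.range (j+1), (a+1) := by
    rw [← Finset.sum_range_reflect (fun i => i + 1) (j+1)]
    apply Finset.sum_congr rfl
    intro i hi
    simp only [Finset.mem_range] at hi
    omega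
  have h2 : ∑ a ∈ Finset.range (j+2), a = ∑ a ∈ Finset.range (j+1), (a+1) + 0 :=
    Finset.sum_range_succ' _ _
  have h3 := Finset.sum_range_id_mul_two (j+2)
  have h4 : (j+2) * (j+2-1) = (j+1) * (j+2) := by
    have : j + 2 - 1 = j + 1 := rfl
    rw [this, Nat.mul_comm]
  rw [h4] at h3
  rw [h1]
  omega


lemma mod_unique_aux (x y b b' e : ℕ) (hb : b < e) (hb' : b' < e)
    (h : x * e + b = y * e + b') : x = y := by
  rcases Nat.lt_trichotomy x y with h1|h1|h1
  · nlinarith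
  · exact h1
  · nlinarith

open scoped Classical in
theorem semigroup_counting_case_a
    (d : ℕ) (hd : 1 < d) (j : ℕ) (hj : j ≤ d - 2) :
    ((Finset.range (j * d + 1)).filter
        (fun n => ∃ a b : ℕ, n = a * (d - 1) + b * d)).card = (j + 1) * (j + 2) / 2 := by
  obtain ⟨e, rfl⟩ : ∃ e, d = e + 1 := ⟨d - 1, by omega⟩
  have he : 1 ≤ e := by omega
  have hje : j + 1 ≤ e := by omega
  have hset : ((Finset.range (j * (e+1) + 1)).filter
        (fun n => ∃ a b : ℕ, n = a * (e + 1 - 1) + b * (e+1)))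
      = ((Finset.range (j+1)).sigma (fun a => Finset.range (j+1-a))).image
          (fun p => p.1 * (e + 1 - 1) + p.2 * (e+1)) := by
    ext n
    simp only [Finset.mem_filter, Finset.mem_image, Finset.mem_sigma, Finset.mem_range,
      Nat.add_sub_cancel]
    constructor
    · rintro ⟨hn, a, b, rfl⟩
      have hab : a + b ≤ j := by
        by_contra h
        push_neg at h
        nlinarith
      refine ⟨⟨a, b⟩, ⟨?_, ?_⟩, rfl⟩
      · show a < j + 1; omega
      · show b < j + 1 - a; omega
    · rintro ⟨⟨a, b⟩, ⟨ha, hb⟩, rfl⟩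
      have ha' : a < j + 1 := ha
      have hb' : b < j + 1 - a := hb
      refine ⟨?_, a, b, rfl⟩
      show a * (e + 1 - 1) + b * (e + 1) < j * (e + 1) + 1
      have : a + b ≤ j := by omega
      calc a * (e + 1 - 1) + b * (e + 1) ≤ a * (e + 1) + b * (e + 1) := by
              gcongr
              omega
        _ = (a + b) * (e + 1) := by ring
        _ ≤ j * (e + 1) := by gcongr
        _ < j * (e + 1) + 1 := by omega
  rw [hset, Finset.card_image_of_injOn, Finset.card_sigma]
  · simp only [Finset.card_range]
    exact triangle_sum j
  · rintro ⟨a, b⟩ hp ⟨a', b'⟩ hq h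
    simp only [Finset.coe_sigma, Set.mem_sigma_iff, Finset.mem_coe, Finset.mem_range] at hp hq
    have hp1 : a < j + 1 := hp.1
    have hp2 : b < j + 1 - a := hp.2
    have hq1 : a' < j + 1 := hq.1
    have hq2 : b' < j + 1 - a' := hq.2
    have h' : a * e + b * (e + 1) = a' * e + b' * (e + 1) := by
      simpa [Nat.add_sub_cancel] using h
    have heq : (a + b) * e + b = (a' + b') * e + b' := by
      have e1 : (a + b) * e + b = a * e + b * (e + 1) := by ring
      have e2 : (a' + b') * e + b' = a' * e + b' * (e + 1) := by ring
      rw [e1, e2]; exact h'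
    have hb : b < e := by omega
    have hb'' : b' < e := by omega
    have hx : a + b = a' + b' := mod_unique_aux _ _ _ _ _ hb hb'' heq
    have hbb : b = b' := by
      rw [hx] at heq; omega
    have haa : a = a' := by omega
    subst hbb; subst haa; rfl
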